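/- For all 0 ≤ k ≤ n and complex numbers r_1, r_2 with r_1 + r_2 = r, we have W_{m,r,q}(n,k) = ∑_{j=k}^{n} C(n,j) r_2^{n-j} W_{m,r_1,q}(j,k). -/
import Mathlib


open Finset

noncomputable def qint (q : ℂ) (n : ℕ) : ℂ := (q ^ n - 1) / (q - 1)

/-- (q,r)-Whitney numbers of the first kind, via the triangular recurrence
`w(n+1,k) = q^{-n} (w(n,k-1) - (m[n]_q + r) w(n,k))`, with `w(0,0)=1` and
`w(n,k)=0` for `k>n` (the `k<0` values are zero, absorbed in the `k=0` case). -/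
noncomputable def qw (q m r : ℂ) : ℕ → ℕ → ℂ
  | 0, 0 => 1
  | 0, _ + 1 => 0
  | n + 1, 0 => q ^ (-(n : ℤ)) * (0 - (m * qint q n + r) * qw q m r n 0)
  | n + 1, k + 1 => q ^ (-(n : ℤ)) * (qw q m r n k - (m * qint q n + r) * qw q m r n (k + 1))

/-- (q,r)-Whitney numbers of the second kind, via
`W(n+1,k) = q^{k-1} W(n,k-1) + (m[k]_q + r) W(n,k)`, with `W(0,0)=1`. -/
noncomputable def qW (q m r : ℂ) : ℕ → ℕ → ℂ
  | 0, 0 => 1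
  | 0, _ + 1 => 0
  | n + 1, 0 => (m * qint q 0 + r) * qW q m r n 0
  | n + 1, k + 1 => q ^ k * qW q m r n k + (m * qint q (k + 1) + r) * qW q m r n (k + 1)

lemma qW_eq_zero (q m r : ℂ) : ∀ n k, n < k → qW q m r n k = 0 := by
  intro n
  induction n with
  | zero =>
    intro k hk
    cases k with
    | zero => omega
    | succ k => simp [qW]
  | succ n ih =>
    intro k hk
    cases k with
    | zero => omega
    | succ k =>
      rw [qW, ih k (by omega), ih (k+1) (by omega)]
      ring

lemma key (q m r₁ r₂ : ℂ) : ∀ n k, qW q m (r₁ + r₂) n k =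
    ∑ j ∈ range (n+1), (n.choose j : ℂ) * r₂ ^ (n - j) * qW q m r₁ j k := by
  intro n
  induction n with
  | zero => intro k; cases k <;> simp [qW]
  | succ n ih =>
    have hsplit : ∀ k', ∑ j ∈ range (n+2), ((n+1).choose j : ℂ) * r₂ ^ (n+1-j) * qW q m r₁ j k'
        = (∑ i ∈ range (n+1), (n.choose i : ℂ) * r₂ ^ (n-i) * qW q m r₁ (i+1) k')
          + r₂ * ∑ j ∈ range (n+1), (n.choose j : ℂ) * r₂ ^ (n-j) * qW q m r₁ j k' := by
      intro k'
      rw [Finset.sum_range_succ' (fun j => ((n+1).choose j : ℂ) * r₂ ^ (n+1-j) * qW q m r₁ j k') (n+1)]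
      have h1 : ∀ i ∈ range (n+1),
          ((n+1).choose (i+1) : ℂ) * r₂ ^ (n+1-(i+1)) * qW q m r₁ (i+1) k'
          = (n.choose i : ℂ) * r₂ ^ (n-i) * qW q m r₁ (i+1) k'
            + (n.choose (i+1) : ℂ) * r₂ ^ (n-i) * qW q m r₁ (i+1) k' := by
        intro i _
        rw [Nat.choose_succ_succ, Nat.succ_sub_succ]
        push_cast
        ring
      rw [Finset.sum_congr rfl h1, Finset.sum_add_distrib]
      have h2 : (∑ i ∈ range (n+1), (n.choose (i+1) : ℂ) * r₂ ^ (n-i) * qW q m r₁ (i+1) k')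
          + ((n+1).choose 0 : ℂ) * r₂ ^ (n+1-0) * qW q m r₁ 0 k'
          = r₂ * ∑ j ∈ range (n+1), (n.choose j : ℂ) * r₂ ^ (n-j) * qW q m r₁ j k' := by
        rw [Finset.mul_sum,
          Finset.sum_range_succ' (fun j => r₂ * ((n.choose j : ℂ) * r₂ ^ (n-j) * qW q m r₁ j k')) n,
          Finset.sum_range_succ (fun i => (n.choose (i+1) : ℂ) * r₂ ^ (n-i) * qW q m r₁ (i+1) k') n]
        simp only [Nat.choose_succ_self, Nat.cast_zero, zero_mul, add_zero, Nat.choose_zero_right,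
          Nat.cast_one, one_mul, Nat.sub_zero]
        have h3 : ∀ i ∈ range n, (n.choose (i+1) : ℂ) * r₂ ^ (n-i) * qW q m r₁ (i+1) k'
            = r₂ * ((n.choose (i+1) : ℂ) * r₂ ^ (n-(i+1)) * qW q m r₁ (i+1) k') := by
          intro i hi
          rw [Finset.mem_range] at hi
          have he : n - i = (n - (i+1)) + 1 := by omega
          rw [he, pow_succ]
          ring
        rw [Finset.sum_congr rfl h3]
        ring
      rw [add_assoc, h2]
    intro k
    cases k with
    | zero =>
      rw [qW, ih 0, hsplit 0]
      have h4 : ∀ i ∈ range (n+1), (n.choose i : ℂ) * r₂ ^ (n-i) * qW q m r₁ (i+1) 0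
          = (m * qint q 0 + r₁) * ((n.choose i : ℂ) * r₂ ^ (n-i) * qW q m r₁ i 0) := by
        intro i _; rw [qW]; ring
      rw [Finset.sum_congr rfl h4, ← Finset.mul_sum]
      ring
    | succ k =>
      rw [qW, ih k, ih (k+1), hsplit (k+1)]
      have h4 : ∀ i ∈ range (n+1), (n.choose i : ℂ) * r₂ ^ (n-i) * qW q m r₁ (i+1) (k+1)
          = q ^ k * ((n.choose i : ℂ) * r₂ ^ (n-i) * qW q m r₁ i k)
            + (m * qint q (k+1) + r₁) * ((n.choose i : ℂ) * r₂ ^ (n-i) * qW q m r₁ i (k+1)) := by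
        intro i _; rw [qW]; ring
      rw [Finset.sum_congr rfl h4, Finset.sum_add_distrib, ← Finset.mul_sum, ← Finset.mul_sum]
      ring

theorem stmt12 (q m r r₁ r₂ : ℂ) (hq0 : q ≠ 0) (hq1 : q ≠ 1) (hr : r = r₁ + r₂)
    (n k : ℕ) (hkn : k ≤ n) :
    qW q m r n k =
      ∑ j ∈ Finset.Icc k n, (n.choose j : ℂ) * r₂ ^ (n - j) * qW q m r₁ j k := by
  subst hr
  rw [key]
  refine (Finset.sum_subset ?_ ?_).symm
  · intro j hj
    rw [Finset.mem_Icc] at hj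
    rw [Finset.mem_range]
    omega
  · intro j hj hj'
    rw [Finset.mem_range] at hj
    rw [Finset.mem_Icc] at hj'
    have : j < k := by omega
    rw [qW_eq_zero q m r₁ j k this]
    ring
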